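/- arXiv:2402.13953 — 3 statements merged into one kernel-verified Lean document; each statement's English description precedes it below -/
import Mathlib

section
/- For all real q ≥ 3, one has 2·((q-1)/(q+1))^((q-1)/2) ≤ 1, with equality if and only if q = 3. -/
open Real

lemma log_interp {v : ℝ} (h1 : 1 < v) (h2 : v < 2) :
    (v - 1) * Real.log 2 < Real.log v := by
  have key := strictConcaveOn_log_Ioi.2 (Set.mem_Ioi.2 (by norm_num : (0:ℝ) < 1))
    (Set.mem_Ioi.2 (by norm_num : (0:ℝ) < 2)) (by norm_num)
    (show 0 < 2 - v by linarith) (show 0 < v - 1 by linarith) (by ring)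
  simp only [smul_eq_mul, Real.log_one, mul_zero, zero_add] at key
  have : (2 - v) * 1 + (v - 1) * 2 = v := by ring
  rw [this] at key
  linarith

lemma strict_lt (q : ℝ) (hq : 3 < q) :
    2 * ((q - 1) / (q + 1)) ^ ((q - 1) / 2) < 1 := by
  have hq1 : (0:ℝ) < q - 1 := by linarith
  have hq2 : (0:ℝ) < q + 1 := by linarith
  set v : ℝ := (q + 1) / (q - 1) with hv
  have hv1 : 1 < v := by rw [hv, lt_div_iff₀ hq1]; linarith
  have hv2 : v < 2 := by rw [hv, div_lt_iff₀ hq1]; linarith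
  have hvm : v - 1 = 2 / (q - 1) := by rw [hv]; field_simp; ring
  have hlog := log_interp hv1 hv2
  -- (q-1)/2 * log v > log 2
  have h2 : Real.log 2 < (q - 1) / 2 * Real.log v := by
    rw [hvm] at hlog
    have := (mul_lt_mul_iff_right₀ (show (0:ℝ) < (q-1)/2 by linarith)).2 hlog
    calc Real.log 2 = (q - 1) / 2 * (2 / (q - 1) * Real.log 2) := by
          field_simp
      _ < (q - 1) / 2 * Real.log v := this
  have hx0 : (0:ℝ) < (q - 1) / (q + 1) := div_pos hq1 hq2
  have hxv : (q - 1) / (q + 1) = v⁻¹ := by rw [hv]; field_simp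
  have hlogx : Real.log ((q - 1) / (q + 1)) = -Real.log v := by
    rw [hxv, Real.log_inv]
  have key : ((q - 1) / (q + 1)) ^ ((q - 1) / 2) < 1 / 2 := by
    rw [Real.rpow_def_of_pos hx0, hlogx]
    have : (1:ℝ)/2 = Real.exp (-Real.log 2) := by
      rw [Real.exp_neg, Real.exp_log (by norm_num)]; norm_num
    rw [this]
    apply Real.exp_lt_exp.2
    nlinarith
  linarith

theorem two_mul_rpow_le_one (q : ℝ) (hq : 3 ≤ q) :
    2 * ((q - 1) / (q + 1)) ^ ((q - 1) / 2) ≤ 1 ∧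
      (2 * ((q - 1) / (q + 1)) ^ ((q - 1) / 2) = 1 ↔ q = 3) := by
  rcases eq_or_lt_of_le hq with h3 | h3
  · subst h3
    norm_num
  · constructor
    · exact (strict_lt q h3).le
    · constructor
      · intro h; exact absurd h (ne_of_lt (strict_lt q h3))
      · intro h; linarith
end

section
/- The function q ↦ 2·((q-1)/(q+1))^((q-1)/2) is strictly decreasing on the interval (1, ∞). -/
theorem strictAntiOn_two_mul_rpow :
    StrictAntiOn (fun q : ℝ => 2 * ((q - 1) / (q + 1)) ^ ((q - 1) / 2)) (Set.Ioi 1) := by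
  have hg : StrictAntiOn (fun q : ℝ => (q - 1) / 2 * (Real.log (q - 1) - Real.log (q + 1)))
      (Set.Ioi 1) := by
    apply strictAntiOn_of_deriv_neg (convex_Ioi 1)
    · apply ContinuousOn.mul (by fun_prop)
      apply ContinuousOn.sub
      · exact Real.continuousOn_log.comp (by fun_prop)
          (fun x hx => by simp only [Set.mem_Ioi] at hx; simp; intro h; linarith)
      · exact Real.continuousOn_log.comp (by fun_prop)
          (fun x hx => by simp only [Set.mem_Ioi] at hx; simp; intro h; linarith)
    · intro x hx
      rw [interior_Ioi, Set.mem_Ioi] at hx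
      have hx1 : (0:ℝ) < x - 1 := by linarith
      have hx2 : (0:ℝ) < x + 1 := by linarith
      have h1 : HasDerivAt (fun q : ℝ => (q - 1) / 2) (1 / 2) x := by
        simpa using ((hasDerivAt_id x).sub_const 1).div_const 2
      have h2 : HasDerivAt (fun q : ℝ => Real.log (q - 1)) (1 / (x - 1)) x := by
        simpa using HasDerivAt.log ((hasDerivAt_id x).sub_const 1) (ne_of_gt hx1)
      have h3 : HasDerivAt (fun q : ℝ => Real.log (q + 1)) (1 / (x + 1)) x := by
        simpa using HasDerivAt.log ((hasDerivAt_id x).add_const 1) (ne_of_gt hx2)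
      have hD : HasDerivAt (fun q : ℝ => (q - 1) / 2 * (Real.log (q - 1) - Real.log (q + 1)))
          (1 / 2 * (Real.log (x - 1) - Real.log (x + 1)) +
            (x - 1) / 2 * (1 / (x - 1) - 1 / (x + 1))) x := h1.mul (h2.sub h3)
      rw [hD.deriv]
      have hlt : Real.log ((x - 1) / (x + 1)) < (x - 1) / (x + 1) - 1 :=
        Real.log_lt_sub_one_of_pos (by positivity) (by
          intro h
          have : x - 1 = x + 1 := by
            field_simp at h; linarith
          linarith)
      rw [Real.log_div (ne_of_gt hx1) (ne_of_gt hx2)] at hlt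
      have e1 : (x - 1) / 2 * (1 / (x - 1) - 1 / (x + 1)) = 1 / (x + 1) := by
        field_simp; ring
      have e2 : (x - 1) / (x + 1) - 1 = -2 * (1 / (x + 1)) := by
        field_simp; ring
      rw [e1]
      rw [e2] at hlt
      linarith
  intro x hx y hy hxy
  have key : ∀ q ∈ Set.Ioi (1:ℝ),
      2 * ((q - 1) / (q + 1)) ^ ((q - 1) / 2) =
        2 * Real.exp ((q - 1) / 2 * (Real.log (q - 1) - Real.log (q + 1))) := by
    intro q hq
    rw [Set.mem_Ioi] at hq
    have h1 : (0:ℝ) < q - 1 := by linarith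
    have h2 : (0:ℝ) < q + 1 := by linarith
    rw [Real.rpow_def_of_pos (by positivity), Real.log_div (ne_of_gt h1) (ne_of_gt h2),
      mul_comm (Real.log (q - 1) - Real.log (q + 1))]
  show 2 * ((y - 1) / (y + 1)) ^ ((y - 1) / 2) < 2 * ((x - 1) / (x + 1)) ^ ((x - 1) / 2)
  rw [key x hx, key y hy]
  exact mul_lt_mul_of_pos_left (Real.exp_lt_exp.mpr (hg hx hy hxy)) two_pos
end

section
/- For every real x ≥ 5/2, one has ((x+1)/(x+3/2))·(1 + 1/x)^(2x+1) ≤ e². Consequently, for all integers m ≥ 2, (1/4)·((m+1/2)/(m+1))·(1 + 1/(m-1/2))^{2m} < e²/4. -/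
private lemma alpha_key (x : ℝ) (hx : 5 / 2 ≤ x) :
    ((x + 1) / (x + 3 / 2)) * (1 + 1 / x) ^ (2 * x + 1) < Real.exp 2 := by
  have hx0 : (0:ℝ) < x := by linarith
  have h1 : (0:ℝ) < x + 1/4 := by linarith
  have h2 : (0:ℝ) < x + 1/2 := by linarith
  have h3 : (0:ℝ) < x + 3/4 := by linarith
  have h4 : (0:ℝ) < x + 1 := by linarith
  have h5 : (0:ℝ) < x + 3/2 := by linarith
  have hb : (0:ℝ) < 1 + 1/x := by positivity
  have hR : (0:ℝ) < (x + 3/2) / (x + 1) := by positivity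
  -- bound each telescoping log
  have e1 : Real.log ((x + 1/4)/x) ≤ 1/(4*x) := by
    have := Real.log_le_sub_one_of_pos (show (0:ℝ) < (x+1/4)/x by positivity)
    have h : (x+1/4)/x - 1 = 1/(4*x) := by field_simp; ring
    linarith [h ▸ this]
  have e2 : Real.log ((x + 1/2)/(x + 1/4)) ≤ 1/(4*x+1) := by
    have := Real.log_le_sub_one_of_pos (show (0:ℝ) < (x+1/2)/(x+1/4) by positivity)
    have h : (x+1/2)/(x+1/4) - 1 = 1/(4*x+1) := by field_simp; ring
    linarith [h ▸ this]
  have e3 : Real.log ((x + 3/4)/(x + 1/2)) ≤ 1/(4*x+2) := by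
    have := Real.log_le_sub_one_of_pos (show (0:ℝ) < (x+3/4)/(x+1/2) by positivity)
    have h : (x+3/4)/(x+1/2) - 1 = 1/(4*x+2) := by field_simp; ring
    linarith [h ▸ this]
  have e4 : Real.log ((x + 1)/(x + 3/4)) ≤ 1/(4*x+3) := by
    have := Real.log_le_sub_one_of_pos (show (0:ℝ) < (x+1)/(x+3/4) by positivity)
    have h : (x+1)/(x+3/4) - 1 = 1/(4*x+3) := by field_simp; ring
    linarith [h ▸ this]
  have eR : 1/(2*x+3) ≤ Real.log ((x + 3/2)/(x + 1)) := by
    have := Real.log_le_sub_one_of_pos (show (0:ℝ) < (x+1)/(x+3/2) by positivity)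
    have h : (x+1)/(x+3/2) - 1 = -(1/(2*x+3)) := by field_simp; ring
    have hlog : Real.log ((x+1)/(x+3/2)) = - Real.log ((x+3/2)/(x+1)) := by
      rw [← Real.log_inv]; congr 1; rw [inv_div]
    linarith [h ▸ this, hlog ▸ this]
  -- telescoping
  have split : Real.log (1 + 1/x) =
      Real.log ((x + 1/4)/x) + Real.log ((x + 1/2)/(x + 1/4))
      + Real.log ((x + 3/4)/(x + 1/2)) + Real.log ((x + 1)/(x + 3/4)) := by
    rw [Real.log_div h1.ne' hx0.ne', Real.log_div h2.ne' h1.ne',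
        Real.log_div h3.ne' h2.ne', Real.log_div h4.ne' h3.ne']
    have : (1 : ℝ) + 1/x = (x+1)/x := by field_simp
    rw [this, Real.log_div h4.ne' hx0.ne']
    ring
  have hsum : Real.log (1 + 1/x) ≤ 1/(4*x) + 1/(4*x+1) + 1/(4*x+2) + 1/(4*x+3) := by
    rw [split]; linarith
  -- the rational inequality
  have hpoly : (2*x+1) * (1/(4*x) + 1/(4*x+1) + 1/(4*x+2) + 1/(4*x+3))
      < 2 + 1/(2*x+3) := by
    have hy : (0:ℝ) ≤ x - 5/2 := by linarith
    rw [← sub_pos]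
    have heq : 2 + 1/(2*x+3) - (2*x+1) * (1/(4*x) + 1/(4*x+1) + 1/(4*x+2) + 1/(4*x+3))
        = (128*(x-5/2)^4 + 1248*(x-5/2)^3 + 4296*(x-5/2)^2 + 5936*(x-5/2) + 2472)
          / ((2*x+3)*(4*x)*(4*x+1)*(4*x+2)*(4*x+3)) := by
      field_simp
      ring
    rw [heq]
    apply div_pos _ (by positivity)
    nlinarith [mul_nonneg hy hy, mul_nonneg (mul_nonneg hy hy) hy,
      mul_nonneg (mul_nonneg (mul_nonneg hy hy) hy) hy]
  -- combine
  have hmain : (2*x+1) * Real.log (1 + 1/x) < 2 + Real.log ((x + 3/2)/(x + 1)) := by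
    have h2x : (0:ℝ) < 2*x+1 := by linarith
    calc (2*x+1) * Real.log (1 + 1/x)
        ≤ (2*x+1) * (1/(4*x) + 1/(4*x+1) + 1/(4*x+2) + 1/(4*x+3)) := by
          exact mul_le_mul_of_nonneg_left hsum h2x.le
      _ < 2 + 1/(2*x+3) := hpoly
      _ ≤ 2 + Real.log ((x + 3/2)/(x + 1)) := by linarith
  rw [Real.rpow_def_of_pos hb, mul_comm (Real.log (1 + 1/x))]
  calc ((x + 1) / (x + 3/2)) * Real.exp ((2*x+1) * Real.log (1 + 1/x))
      < ((x + 1) / (x + 3/2)) * Real.exp (2 + Real.log ((x + 3/2)/(x + 1))) := by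
        apply mul_lt_mul_of_pos_left _ (by positivity)
        exact Real.exp_lt_exp.mpr hmain
    _ = Real.exp 2 := by
        rw [Real.exp_add, Real.exp_log hR]
        field_simp

theorem alpha_quotient_bound :
    (∀ x : ℝ, 5 / 2 ≤ x →
        ((x + 1) / (x + 3 / 2)) * (1 + 1 / x) ^ (2 * x + 1) ≤ Real.exp 2) ∧
    ∀ m : ℕ, 2 ≤ m →
      (1 / 4 : ℝ) * (((m : ℝ) + 1 / 2) / ((m : ℝ) + 1)) * (1 + 1 / ((m : ℝ) - 1 / 2)) ^ (2 * m)
        < Real.exp 2 / 4 := by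
  refine ⟨fun x hx => (alpha_key x hx).le, fun m hm => ?_⟩
  have hexp2 : Real.exp 2 = Real.exp 1 * Real.exp 1 := by
    rw [← Real.exp_add]; norm_num
  rcases eq_or_lt_of_le hm with h2 | h3
  · cases h2
    norm_num
    nlinarith [Real.exp_one_gt_d9]
  · have hm3 : 3 ≤ m := h3
    have hm3' : (3:ℝ) ≤ (m:ℝ) := by exact_mod_cast hm3
    set x : ℝ := (m:ℝ) - 1/2 with hxdef
    have hx : 5/2 ≤ x := by rw [hxdef]; linarith
    have hk := alpha_key x hx
    have hcast : ((1:ℝ) + 1/((m:ℝ) - 1/2)) ^ (2*m) = (1 + 1/x) ^ (2*x+1) := by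
      rw [← Real.rpow_natCast]
      congr 1
      push_cast; ring
    have e1 : ((m:ℝ) + 1/2) = x + 1 := by rw [hxdef]; ring
    have e2 : ((m:ℝ) + 1) = x + 3/2 := by rw [hxdef]; ring
    rw [hcast, e1, e2, mul_assoc]
    linarith
end
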